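/- Let a1 > 1, a2 > 1, d > 0, k > 0, θ ∈ ℝ, and let α > 0, β > 0 be arbitrary constants. Suppose (u, v) is a pair of nonnegative C² functions on ℝ satisfying u'' + θ u' + u(1 − u − a1 v) = 0 and d v'' + θ v' + k v(1 − a2 u − v) = 0 on ℝ, with (u, v)(x) → (1, 0) as x → −∞ and (u, v)(x) → (0, 1) as x → +∞. Then for q(x) = α u(x) + d β v(x), one has min[α/(a2 d), β/a1] · min[1, d²] ≤ q(x) ≤ max[α/d, β] · max[1, d²] for every x ∈ ℝ. -/

import Mathlib

open Filter Set Topology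

lemma lv_deriv_nonneg_left {f : ℝ → ℝ} {a b : ℝ} (hf : DifferentiableAt ℝ f b)
    (hab : a < b) (h : ∀ x ∈ Set.Ico a b, f x ≤ f b) : 0 ≤ deriv f b := by
  have H : Filter.Tendsto (slope f b) (𝓝[<] b) (𝓝 (deriv f b)) :=
    (hasDerivAt_iff_tendsto_slope.mp hf.hasDerivAt).mono_left
      (nhdsWithin_mono b (fun x hx => ne_of_lt hx))
  refine ge_of_tendsto H ?_
  filter_upwards [Ioo_mem_nhdsLT_of_mem (⟨hab, le_refl b⟩ : b ∈ Set.Ioc a b)] with x hx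
  have h1 : f x - f b ≤ 0 := sub_nonpos.mpr (h x ⟨hx.1.le, hx.2⟩)
  have h2 : x - b ≤ 0 := by linarith [hx.2]
  rw [slope_def_field]
  exact div_nonneg_of_nonpos h1 h2

lemma lv_deriv_nonpos_right {f : ℝ → ℝ} {a b : ℝ} (hf : DifferentiableAt ℝ f a)
    (hab : a < b) (h : ∀ x ∈ Set.Ioc a b, f x ≤ f a) : deriv f a ≤ 0 := by
  have H : Filter.Tendsto (slope f a) (𝓝[>] a) (𝓝 (deriv f a)) :=
    (hasDerivAt_iff_tendsto_slope.mp hf.hasDerivAt).mono_left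
      (nhdsWithin_mono a (fun x hx => ne_of_gt hx))
  refine le_of_tendsto H ?_
  filter_upwards [Ioo_mem_nhdsGT_of_mem (⟨le_refl a, hab⟩ : a ∈ Set.Ico a b)] with x hx
  have h1 : f x - f a ≤ 0 := sub_nonpos.mpr (h x ⟨hx.1, hx.2.le⟩)
  have h2 : 0 ≤ x - a := by linarith [hx.1]
  rw [slope_def_field]
  exact div_nonpos_of_nonpos_of_nonneg h1 h2

lemma lv_crossing_right {f : ℝ → ℝ} (hf : Continuous f) {x0 y ℓ : ℝ}
    (h0 : f x0 < ℓ) (hx0y : x0 ≤ y) (hy : ℓ ≤ f y) :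
    ∃ b, x0 < b ∧ f b = ℓ ∧ ∀ x ∈ Set.Icc x0 b, f x ≤ ℓ := by
  set S : Set ℝ := {x : ℝ | x0 ≤ x ∧ ℓ ≤ f x} with hS
  have hne : S.Nonempty := ⟨y, hx0y, hy⟩
  have hbdd : BddBelow S := ⟨x0, fun x hx => hx.1⟩
  have hclosed : IsClosed S := by
    have : S = Set.Ici x0 ∩ f ⁻¹' Set.Ici ℓ := by
      ext x; simp [hS, Set.mem_setOf_eq, Set.mem_Ici]
    rw [this]
    exact isClosed_Ici.inter (isClosed_Ici.preimage hf)
  set b := sInf S with hb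
  have hbmem : b ∈ S := hclosed.csInf_mem hne hbdd
  have hble : ∀ x ∈ Set.Ico x0 b, f x < ℓ := by
    intro x hx
    by_contra hcon
    push_neg at hcon
    exact absurd (csInf_le hbdd ⟨hx.1, hcon⟩) (not_le.mpr hx.2)
  have hx0b : x0 < b := by
    rcases lt_or_eq_of_le hbmem.1 with h | h
    · exact h
    · exfalso; rw [← h] at hbmem; exact absurd hbmem.2 (not_le.mpr h0)
  have hfble : f b ≤ ℓ := by
    have ht : Filter.Tendsto f (𝓝[<] b) (𝓝 (f b)) :=
      (hf.tendsto b).mono_left nhdsWithin_le_nhds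
    refine le_of_tendsto ht ?_
    filter_upwards [Ioo_mem_nhdsLT_of_mem (⟨hx0b, le_refl b⟩ : b ∈ Set.Ioc x0 b)] with x hx
    exact (hble x ⟨hx.1.le, hx.2⟩).le
  have hfb : f b = ℓ := le_antisymm hfble hbmem.2
  refine ⟨b, hx0b, hfb, fun x hx => ?_⟩
  rcases eq_or_lt_of_le hx.2 with h | h
  · rw [h, hfb]
  · exact (hble x ⟨hx.1, h⟩).le

lemma lv_crossing_left {f : ℝ → ℝ} (hf : Continuous f) {x0 y ℓ : ℝ}
    (h0 : f x0 < ℓ) (hyx0 : y ≤ x0) (hy : ℓ ≤ f y) :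
    ∃ a, a < x0 ∧ f a = ℓ ∧ ∀ x ∈ Set.Icc a x0, f x ≤ ℓ := by
  set S : Set ℝ := {x : ℝ | x ≤ x0 ∧ ℓ ≤ f x} with hS
  have hne : S.Nonempty := ⟨y, hyx0, hy⟩
  have hbdd : BddAbove S := ⟨x0, fun x hx => hx.1⟩
  have hclosed : IsClosed S := by
    have : S = Set.Iic x0 ∩ f ⁻¹' Set.Ici ℓ := by
      ext x; simp [hS, Set.mem_setOf_eq]
    rw [this]
    exact isClosed_Iic.inter (isClosed_Ici.preimage hf)
  set a := sSup S with ha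
  have hamem : a ∈ S := hclosed.csSup_mem hne hbdd
  have hale : ∀ x ∈ Set.Ioc a x0, f x < ℓ := by
    intro x hx
    by_contra hcon
    push_neg at hcon
    exact absurd (le_csSup hbdd ⟨hx.2, hcon⟩) (not_le.mpr hx.1)
  have hax0 : a < x0 := by
    rcases lt_or_eq_of_le hamem.1 with h | h
    · exact h
    · exfalso; rw [h] at hamem; exact absurd hamem.2 (not_le.mpr h0)
  have hfale : f a ≤ ℓ := by
    have ht : Filter.Tendsto f (𝓝[>] a) (𝓝 (f a)) :=
      (hf.tendsto a).mono_left nhdsWithin_le_nhds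
    refine le_of_tendsto ht ?_
    filter_upwards [Ioo_mem_nhdsGT_of_mem (⟨le_refl a, hax0⟩ : a ∈ Set.Ico a x0)] with x hx
    exact (hale x ⟨hx.1, hx.2.le⟩).le
  have hfa : f a = ℓ := le_antisymm hfale hamem.2
  refine ⟨a, hax0, hfa, fun x hx => ?_⟩
  rcases eq_or_lt_of_le hx.1 with h | h
  · rw [← h, hfa]
  · exact (hale x ⟨h, hx.2⟩).le

lemma lv_exists_min {f : ℝ → ℝ} (hf : Continuous f) {L1 L2 z : ℝ}
    (h1 : Filter.Tendsto f Filter.atBot (𝓝 L1)) (h2 : Filter.Tendsto f Filter.atTop (𝓝 L2))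
    (hz1 : f z < L1) (hz2 : f z < L2) : ∃ x0, ∀ x, f x0 ≤ f x := by
  obtain ⟨lo, hlo⟩ := Filter.eventually_atBot.mp (h1.eventually (eventually_gt_nhds hz1))
  obtain ⟨hi, hhi⟩ := Filter.eventually_atTop.mp (h2.eventually (eventually_gt_nhds hz2))
  have hz_mem : z ∈ Set.Icc (min lo z) (max hi z) := ⟨min_le_right _ _, le_max_right _ _⟩
  obtain ⟨x0, hx0mem, hx0⟩ := isCompact_Icc.exists_isMinOn ⟨z, hz_mem⟩ hf.continuousOn
  refine ⟨x0, fun x => ?_⟩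
  rcases le_or_gt (min lo z) x with hax | hax
  · rcases le_or_gt x (max hi z) with hxb | hxb
    · exact isMinOn_iff.mp hx0 x ⟨hax, hxb⟩
    · have hx' : f z < f x := hhi x (le_trans (le_max_left _ _) hxb.le)
      exact le_trans (isMinOn_iff.mp hx0 z hz_mem) hx'.le
  · have hx' : f z < f x := hlo x (le_trans hax.le (min_le_left _ _))
    exact le_trans (isMinOn_iff.mp hx0 z hz_mem) hx'.le

set_option maxHeartbeats 2000000 in
/-- Maximum principle for `q(x) = α u(x) + d β v(x)` for the scaled two-species
Lotka-Volterra traveling-wave system under the bistable condition. -/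
theorem lv_max_principle_q
    (a1 a2 d k θ α β : ℝ)
    (ha1 : 1 < a1) (ha2 : 1 < a2) (hd : 0 < d) (hk : 0 < k)
    (hα : 0 < α) (hβ : 0 < β)
    (u v : ℝ → ℝ)
    (hu : ContDiff ℝ 2 u) (hv : ContDiff ℝ 2 v)
    (hu0 : ∀ x, 0 ≤ u x) (hv0 : ∀ x, 0 ≤ v x)
    (hequ : ∀ x, deriv (deriv u) x + θ * deriv u x
      + u x * (1 - u x - a1 * v x) = 0)
    (heqv : ∀ x, d * deriv (deriv v) x + θ * deriv v x
      + k * v x * (1 - a2 * u x - v x) = 0)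
    (huM : Tendsto u atBot (nhds 1)) (hvM : Tendsto v atBot (nhds 0))
    (huP : Tendsto u atTop (nhds 0)) (hvP : Tendsto v atTop (nhds 1)) :
    ∀ x : ℝ,
      min (α / (a2 * d)) (β / a1) * min 1 (d ^ 2) ≤ α * u x + d * β * v x ∧
      α * u x + d * β * v x ≤ max (α / d) β * max 1 (d ^ 2) := by
  have hd0 : (0:ℝ) < d := hd
  -- differentiability facts
  have hu1 : Differentiable ℝ u := hu.differentiable two_ne_zero
  have hv1 : Differentiable ℝ v := hv.differentiable two_ne_zero
  have hu2 : Differentiable ℝ (deriv u) := by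
    have h2 : ContDiff ℝ ((1 : WithTop ℕ∞) + 1) u := by norm_num at hu ⊢; exact hu
    exact (contDiff_succ_iff_deriv.mp h2).2.2.differentiable one_ne_zero
  have hv2 : Differentiable ℝ (deriv v) := by
    have h2 : ContDiff ℝ ((1 : WithTop ℕ∞) + 1) v := by norm_num at hv ⊢; exact hv
    exact (contDiff_succ_iff_deriv.mp h2).2.2.differentiable one_ne_zero
  -- constants
  obtain ⟨m, hm⟩ : ∃ m, m = min (α / (a2 * d)) (β / a1) := ⟨_, rfl⟩
  obtain ⟨M, hM⟩ : ∃ M, M = max (α / d) β := ⟨_, rfl⟩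
  have hm0 : 0 < m := by rw [hm]; exact lt_min (by positivity) (by positivity)
  have hM0 : 0 < M := by rw [hM]; exact lt_of_lt_of_le hβ (le_max_right _ _)
  have hma : m * (a2 * d) ≤ α := by
    have h := min_le_left (α / (a2 * d)) (β / a1)
    rw [← hm] at h
    exact (le_div_iff₀ (by positivity)).mp h
  have hmb : m * a1 ≤ β := by
    have h := min_le_right (α / (a2 * d)) (β / a1)
    rw [← hm] at h
    exact (le_div_iff₀ (by positivity)).mp h
  have hMa : α ≤ d * M := by
    have h := le_max_left (α / d) β
    rw [← hM, div_le_iff₀ hd0] at h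
    linarith only [h]
  have hMb : β ≤ M := by
    have h := le_max_right (α / d) β
    rw [← hM] at h
    exact h
  -- functions
  obtain ⟨q, hqdef⟩ : ∃ q : ℝ → ℝ, q = fun y => α * u y + d * β * v y := ⟨_, rfl⟩
  obtain ⟨p, hpdef⟩ : ∃ p : ℝ → ℝ, p = fun y => α * u y + β * v y := ⟨_, rfl⟩
  obtain ⟨F, hFdef⟩ : ∃ F : ℝ → ℝ,
      F = fun y => α * deriv u y + d * β * deriv v y + θ * (α * u y + β * v y) := ⟨_, rfl⟩
  have hqd : ∀ x, HasDerivAt q (α * deriv u x + d * β * deriv v x) x := by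
    intro x
    rw [hqdef]
    exact ((hu1 x).hasDerivAt.const_mul α).add ((hv1 x).hasDerivAt.const_mul (d * β))
  have hqdiff : Differentiable ℝ q := fun x => (hqd x).differentiableAt
  have hqcont : Continuous q := hqdiff.continuous
  have hFd : ∀ x, HasDerivAt F
      (-(α * (u x * (1 - u x - a1 * v x)) + k * β * (v x * (1 - a2 * u x - v x)))) x := by
    intro x
    rw [hFdef]
    have h1 : HasDerivAt (fun y => α * deriv u y) (α * deriv (deriv u) x) x :=
      ((hu2 x).hasDerivAt).const_mul α
    have h2 : HasDerivAt (fun y => d * β * deriv v y) (d * β * deriv (deriv v) x) x :=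
      ((hv2 x).hasDerivAt).const_mul (d * β)
    have h3 : HasDerivAt (fun y => θ * (α * u y + β * v y))
        (θ * (α * deriv u x + β * deriv v x)) x :=
      (((hu1 x).hasDerivAt.const_mul α).add ((hv1 x).hasDerivAt.const_mul β)).const_mul θ
    have h4 := (h1.add h2).add h3
    refine h4.congr_deriv ?_
    linear_combination α * hequ x + β * heqv x
  have hFdiff : Differentiable ℝ F := fun x => (hFd x).differentiableAt
  have hFcont : Continuous F := hFdiff.continuous
  have hFq : ∀ x, F x = deriv q x + θ * p x := by
    intro x
    rw [(hqd x).deriv, hFdef, hpdef]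
  -- limits of q
  have hqBot : Tendsto q atBot (𝓝 α) := by
    rw [hqdef]
    have h := (huM.const_mul α).add (hvM.const_mul (d * β))
    simpa using h
  have hqTop : Tendsto q atTop (𝓝 (d * β)) := by
    rw [hqdef]
    have h := (huP.const_mul α).add (hvP.const_mul (d * β))
    simpa using h
  -- region lemmas
  have hreg_low : ∀ x, q x ≤ d * m →
      0 ≤ 1 - u x - a1 * v x ∧ 0 ≤ 1 - a2 * u x - v x := by
    intro x hx
    have hx' : α * u x + d * β * v x ≤ d * m := by
      rw [hqdef] at hx; exact hx
    have h1 : m * (a2 * d) * u x ≤ α * u x := mul_le_mul_of_nonneg_right hma (hu0 x)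
    have h2 : (m * a1) * (d * v x) ≤ β * (d * v x) :=
      mul_le_mul_of_nonneg_right hmb (mul_nonneg hd0.le (hv0 x))
    have h3 : d * m * (a2 * u x + a1 * v x) ≤ d * m * 1 := by
      linarith only [h1, h2, hx']
    have hkey : a2 * u x + a1 * v x ≤ 1 := le_of_mul_le_mul_left h3 (mul_pos hd0 hm0)
    have hu' : (0:ℝ) ≤ (a2 - 1) * u x := mul_nonneg (by linarith only [ha2]) (hu0 x)
    have hv' : (0:ℝ) ≤ (a1 - 1) * v x := mul_nonneg (by linarith only [ha1]) (hv0 x)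
    constructor
    · linarith only [hkey, hu']
    · linarith only [hkey, hv']
  have hreg_up : ∀ x, d * M ≤ q x →
      1 - u x - a1 * v x ≤ 0 ∧ 1 - a2 * u x - v x ≤ 0 := by
    intro x hx
    have hx' : d * M ≤ α * u x + d * β * v x := by
      rw [hqdef] at hx; exact hx
    have h1 : α * u x ≤ d * M * u x := mul_le_mul_of_nonneg_right hMa (hu0 x)
    have h2 : d * β * v x ≤ d * M * v x :=
      mul_le_mul_of_nonneg_right (mul_le_mul_of_nonneg_left hMb hd0.le) (hv0 x)
    have hdM : 0 < d * M := mul_pos hd0 hM0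
    have hu' : (0:ℝ) ≤ d * M * ((a2 - 1) * u x) :=
      mul_nonneg hdM.le (mul_nonneg (by linarith only [ha2]) (hu0 x))
    have hv' : (0:ℝ) ≤ d * M * ((a1 - 1) * v x) :=
      mul_nonneg hdM.le (mul_nonneg (by linarith only [ha1]) (hv0 x))
    constructor
    · have h3 : d * M * 1 ≤ d * M * (u x + a1 * v x) := by
        linarith only [h1, h2, hx', hv']
      have h4 := le_of_mul_le_mul_left h3 hdM
      linarith only [h4]
    · have h3 : d * M * 1 ≤ d * M * (a2 * u x + v x) := by
        linarith only [h1, h2, hx', hu']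
      have h4 := le_of_mul_le_mul_left h3 hdM
      linarith only [h4]
  have hFd_le : ∀ x, q x ≤ d * m → deriv F x ≤ 0 := by
    intro x hx
    obtain ⟨hf, hg⟩ := hreg_low x hx
    rw [(hFd x).deriv]
    have h1 : 0 ≤ α * (u x * (1 - u x - a1 * v x)) :=
      mul_nonneg hα.le (mul_nonneg (hu0 x) hf)
    have h2 : 0 ≤ k * β * (v x * (1 - a2 * u x - v x)) :=
      mul_nonneg (mul_pos hk hβ).le (mul_nonneg (hv0 x) hg)
    linarith only [h1, h2]
  have hFd_ge : ∀ x, d * M ≤ q x → 0 ≤ deriv F x := by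
    intro x hx
    obtain ⟨hf, hg⟩ := hreg_up x hx
    rw [(hFd x).deriv]
    have h1 : α * (u x * (1 - u x - a1 * v x)) ≤ 0 :=
      mul_nonpos_of_nonneg_of_nonpos hα.le (mul_nonpos_of_nonneg_of_nonpos (hu0 x) hf)
    have h2 : k * β * (v x * (1 - a2 * u x - v x)) ≤ 0 :=
      mul_nonpos_of_nonneg_of_nonpos (mul_pos hk hβ).le
        (mul_nonpos_of_nonneg_of_nonpos (hv0 x) hg)
    linarith only [h1, h2]
  ----------------------------------------------------------------
  -- LOWER BOUND
  ----------------------------------------------------------------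
  have hLd : m * min 1 (d ^ 2) ≤ d * m := by
    rcases le_total d 1 with h | h
    · rw [min_eq_right (by nlinarith only [h, hd0] : d ^ 2 ≤ 1)]
      have h5 : 0 ≤ m * (d * (1 - d)) :=
        mul_nonneg hm0.le (mul_nonneg hd0.le (by linarith only [h]))
      linarith only [h5]
    · rw [min_eq_left (by nlinarith only [h] : (1:ℝ) ≤ d ^ 2)]
      have h5 : 0 ≤ m * (d - 1) := mul_nonneg hm0.le (by linarith only [h])
      linarith only [h5]
  have hdmα : d * m < α := by
    have h5 : 0 < d * m * (a2 - 1) :=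
      mul_pos (mul_pos hd0 hm0) (by linarith only [ha2])
    linarith only [hma, h5]
  have hdmβ : d * m < d * β := by
    have h5 : 0 < m * (a1 - 1) := mul_pos hm0 (by linarith only [ha1])
    have h6 : 0 < d * (β - m) := mul_pos hd0 (by linarith only [hmb, h5])
    linarith only [h6]
  have Hlow : ∀ x, m * min 1 (d ^ 2) ≤ q x := by
    by_contra hcon
    push_neg at hcon
    obtain ⟨z, hz⟩ := hcon
    obtain ⟨x0, hx0⟩ := lv_exists_min hqcont hqBot hqTop
      (lt_of_lt_of_le hz (le_trans hLd hdmα.le))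
      (lt_of_lt_of_le hz (le_trans hLd hdmβ.le))
    have hqx0 : q x0 < m * min 1 (d ^ 2) := lt_of_le_of_lt (hx0 z) hz
    have hqx0dm : q x0 < d * m := lt_of_lt_of_le hqx0 hLd
    have hder0 : deriv q x0 = 0 :=
      (show IsLocalMin q x0 from Filter.Eventually.of_forall hx0).deriv_eq_zero
    rcases le_or_gt 0 θ with hθ0 | hθ0
    · -- right side
      obtain ⟨y1, hy1⟩ := Filter.eventually_atTop.mp (hqTop.eventually (eventually_gt_nhds hdmβ))
      obtain ⟨A2, hA2gt, hA2eq, hA2le⟩ := lv_crossing_right hqcont hqx0dm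
        (le_max_right y1 x0) (hy1 (max y1 x0) (le_max_left _ _)).le
      have hderA2 : 0 ≤ deriv q A2 :=
        lv_deriv_nonneg_left (hqdiff A2) hA2gt
          (fun x hx => by rw [hA2eq]; exact hA2le x ⟨hx.1, hx.2.le⟩)
      have hFant : AntitoneOn F (Set.Icc x0 A2) := by
        apply antitoneOn_of_deriv_nonpos (convex_Icc _ _) hFcont.continuousOn
          (fun x _ => (hFdiff x).differentiableWithinAt)
        intro x hx
        rw [interior_Icc] at hx
        exact hFd_le x (hA2le x ⟨hx.1.le, hx.2.le⟩)
      have hFA2 : F A2 ≤ F x0 :=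
        hFant (left_mem_Icc.mpr hA2gt.le) (right_mem_Icc.mpr hA2gt.le) hA2gt.le
      rw [hFq A2, hFq x0, hder0] at hFA2
      rcases eq_or_lt_of_le hθ0 with hθeq | hθpos
      · -- θ = 0 : q is antitone on [x0, A2]
        have hqant : AntitoneOn q (Set.Icc x0 A2) := by
          apply antitoneOn_of_deriv_nonpos (convex_Icc _ _) hqcont.continuousOn
            (fun x _ => (hqdiff x).differentiableWithinAt)
          intro x hx
          rw [interior_Icc] at hx
          have hFx : F x ≤ F x0 :=
            hFant (left_mem_Icc.mpr hA2gt.le) ⟨hx.1.le, hx.2.le⟩ hx.1.le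
          rw [hFq x, hFq x0, hder0, ← hθeq] at hFx
          simpa using hFx
        have h := hqant (left_mem_Icc.mpr hA2gt.le) (right_mem_Icc.mpr hA2gt.le) hA2gt.le
        rw [hA2eq] at h
        linarith only [h, hqx0dm]
      · -- θ > 0
        have hpp : p A2 ≤ p x0 := by
          have h : θ * p A2 ≤ θ * p x0 := by linarith only [hFA2, hderA2]
          exact le_of_mul_le_mul_left h hθpos
        have hpA2 : α * u A2 + β * v A2 = p A2 := by rw [hpdef]
        have hpx0 : α * u x0 + β * v x0 = p x0 := by rw [hpdef]
        have hqA2 : α * u A2 + d * β * v A2 = d * m := by rw [← hA2eq, hqdef]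
        have hqx0' : α * u x0 + d * β * v x0 = q x0 := by rw [hqdef]
        rcases le_total d 1 with hd1 | hd1
        · have hmin : min 1 (d ^ 2) = d ^ 2 := min_eq_right (by nlinarith only [hd1, hd0])
          rw [hmin] at hqx0
          have h1 : d * m ≤ p A2 := by
            rw [← hpA2]
            have hint : (0:ℝ) ≤ (1 - d) * (β * v A2) :=
              mul_nonneg (by linarith only [hd1]) (mul_nonneg hβ.le (hv0 A2))
            linarith only [hqA2, hint]
          have h2 : d * p x0 ≤ q x0 := by
            rw [← hpx0, ← hqx0']
            have hint : (0:ℝ) ≤ (1 - d) * (α * u x0) :=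
              mul_nonneg (by linarith only [hd1]) (mul_nonneg hα.le (hu0 x0))
            linarith only [hint]
          have h4 : d * (d * m) ≤ d * p x0 :=
            mul_le_mul_of_nonneg_left (le_trans h1 hpp) hd0.le
          have e : d * (d * m) = m * d ^ 2 := by ring
          linarith only [h4, e, h2, hqx0]
        · have hmin : min 1 (d ^ 2) = 1 := min_eq_left (by nlinarith only [hd1])
          rw [hmin] at hqx0
          have h1 : d * m ≤ d * p A2 := by
            rw [← hpA2]
            have hint : (0:ℝ) ≤ (d - 1) * (α * u A2) :=
              mul_nonneg (by linarith only [hd1]) (mul_nonneg hα.le (hu0 A2))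
            linarith only [hqA2, hint]
          have h2 : p x0 ≤ q x0 := by
            rw [← hpx0, ← hqx0']
            have hint : (0:ℝ) ≤ (d - 1) * (β * v x0) :=
              mul_nonneg (by linarith only [hd1]) (mul_nonneg hβ.le (hv0 x0))
            linarith only [hint]
          have h3 : m ≤ p A2 := le_of_mul_le_mul_left h1 hd0
          linarith only [h3, hpp, h2, hqx0]
    · -- left side, θ < 0
      obtain ⟨y1, hy1⟩ := Filter.eventually_atBot.mp (hqBot.eventually (eventually_gt_nhds hdmα))
      obtain ⟨A1, hA1lt, hA1eq, hA1le⟩ := lv_crossing_left hqcont hqx0dm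
        (min_le_right y1 x0) (hy1 (min y1 x0) (min_le_left _ _)).le
      have hderA1 : deriv q A1 ≤ 0 :=
        lv_deriv_nonpos_right (hqdiff A1) hA1lt
          (fun x hx => by rw [hA1eq]; exact hA1le x ⟨hx.1.le, hx.2⟩)
      have hFant : AntitoneOn F (Set.Icc A1 x0) := by
        apply antitoneOn_of_deriv_nonpos (convex_Icc _ _) hFcont.continuousOn
          (fun x _ => (hFdiff x).differentiableWithinAt)
        intro x hx
        rw [interior_Icc] at hx
        exact hFd_le x (hA1le x ⟨hx.1.le, hx.2.le⟩)
      have hFA1 : F x0 ≤ F A1 :=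
        hFant (left_mem_Icc.mpr hA1lt.le) (right_mem_Icc.mpr hA1lt.le) hA1lt.le
      rw [hFq A1, hFq x0, hder0] at hFA1
      have hpp : p A1 ≤ p x0 := by
        have h : (-θ) * p A1 ≤ (-θ) * p x0 := by linarith only [hFA1, hderA1]
        exact le_of_mul_le_mul_left h (by linarith only [hθ0])
      have hpA1 : α * u A1 + β * v A1 = p A1 := by rw [hpdef]
      have hpx0 : α * u x0 + β * v x0 = p x0 := by rw [hpdef]
      have hqA1 : α * u A1 + d * β * v A1 = d * m := by rw [← hA1eq, hqdef]
      have hqx0' : α * u x0 + d * β * v x0 = q x0 := by rw [hqdef]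
      rcases le_total d 1 with hd1 | hd1
      · have hmin : min 1 (d ^ 2) = d ^ 2 := min_eq_right (by nlinarith only [hd1, hd0])
        rw [hmin] at hqx0
        have h1 : d * m ≤ p A1 := by
          rw [← hpA1]
          have hint : (0:ℝ) ≤ (1 - d) * (β * v A1) :=
            mul_nonneg (by linarith only [hd1]) (mul_nonneg hβ.le (hv0 A1))
          linarith only [hqA1, hint]
        have h2 : d * p x0 ≤ q x0 := by
          rw [← hpx0, ← hqx0']
          have hint : (0:ℝ) ≤ (1 - d) * (α * u x0) :=
            mul_nonneg (by linarith only [hd1]) (mul_nonneg hα.le (hu0 x0))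
          linarith only [hint]
        have h4 : d * (d * m) ≤ d * p x0 :=
          mul_le_mul_of_nonneg_left (le_trans h1 hpp) hd0.le
        have e : d * (d * m) = m * d ^ 2 := by ring
        linarith only [h4, e, h2, hqx0]
      · have hmin : min 1 (d ^ 2) = 1 := min_eq_left (by nlinarith only [hd1])
        rw [hmin] at hqx0
        have h1 : d * m ≤ d * p A1 := by
          rw [← hpA1]
          have hint : (0:ℝ) ≤ (d - 1) * (α * u A1) :=
            mul_nonneg (by linarith only [hd1]) (mul_nonneg hα.le (hu0 A1))
          linarith only [hqA1, hint]
        have h2 : p x0 ≤ q x0 := by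
          rw [← hpx0, ← hqx0']
          have hint : (0:ℝ) ≤ (d - 1) * (β * v x0) :=
            mul_nonneg (by linarith only [hd1]) (mul_nonneg hβ.le (hv0 x0))
          linarith only [hint]
        have h3 : m ≤ p A1 := le_of_mul_le_mul_left h1 hd0
        linarith only [h3, hpp, h2, hqx0]
  ----------------------------------------------------------------
  -- UPPER BOUND
  ----------------------------------------------------------------
  have hUd : d * M ≤ M * max 1 (d ^ 2) := by
    rcases le_total d 1 with h | h
    · rw [max_eq_left (by nlinarith only [h, hd0] : d ^ 2 ≤ 1)]
      have h5 : 0 ≤ M * (1 - d) := mul_nonneg hM0.le (by linarith only [h])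
      linarith only [h5]
    · rw [max_eq_right (by nlinarith only [h] : (1:ℝ) ≤ d ^ 2)]
      have h5 : 0 ≤ M * (d * (d - 1)) :=
        mul_nonneg hM0.le (mul_nonneg hd0.le (by linarith only [h]))
      linarith only [h5]
  have Hup : ∀ x, q x ≤ M * max 1 (d ^ 2) := by
    by_contra hcon
    push_neg at hcon
    obtain ⟨z, hz⟩ := hcon
    have hzα : α < q z := lt_of_le_of_lt (le_trans hMa hUd) hz
    have hzβ : d * β < q z :=
      lt_of_le_of_lt (le_trans (mul_le_mul_of_nonneg_left hMb hd0.le) hUd) hz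
    obtain ⟨x0, hx0'⟩ := lv_exists_min (f := fun x => - q x) (hqcont.neg) (hqBot.neg)
      (hqTop.neg) (neg_lt_neg hzα) (neg_lt_neg hzβ)
    have hx0 : ∀ x, q x ≤ q x0 := fun x => by
      have h := hx0' x
      simp only [neg_le_neg_iff] at h
      exact h
    have hqx0 : M * max 1 (d ^ 2) < q x0 := lt_of_lt_of_le hz (hx0 z)
    have hder0 : deriv q x0 = 0 :=
      (show IsLocalMax q x0 from Filter.Eventually.of_forall hx0).deriv_eq_zero
    obtain ⟨c, hc⟩ : ∃ c, c = min d (1/d) := ⟨_, rfl⟩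
    have hc0 : 0 < c := by rw [hc]; exact lt_min hd0 (by positivity)
    have hc1 : c ≤ 1 := by
      rw [hc]
      rcases le_total d 1 with h | h
      · exact le_trans (min_le_left _ _) h
      · exact le_trans (min_le_right _ _) ((div_le_one hd0).mpr h)
    have hq0pos : 0 < q x0 := by
      have h7 : (0:ℝ) < M * max 1 (d ^ 2) :=
        mul_pos hM0 (lt_of_lt_of_le one_pos (le_max_left _ _))
      linarith only [h7, hqx0]
    have hkey : d * M < c * q x0 := by
      rcases le_total d 1 with h | h
      · have hceq : c = d := by
          rw [hc]
          exact min_eq_left (by rw [le_div_iff₀ hd0]; nlinarith only [h, hd0])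
        have hmax : max 1 (d ^ 2) = 1 := max_eq_left (by nlinarith only [h, hd0])
        rw [hceq]
        rw [hmax] at hqx0
        have h5 := mul_lt_mul_of_pos_left hqx0 hd0
        linarith only [h5]
      · have hceq : c = 1/d := by
          rw [hc]
          exact min_eq_right (by rw [div_le_iff₀ hd0]; nlinarith only [h])
        have hmax : max 1 (d ^ 2) = d ^ 2 := max_eq_right (by nlinarith only [h])
        rw [hceq]
        rw [hmax] at hqx0
        have h5 := mul_lt_mul_of_pos_left hqx0 (by positivity : (0:ℝ) < 1/d)
        have e : 1/d * (M * d ^ 2) = d * M := by field_simp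
        linarith only [h5, e]
    obtain ⟨ℓ, hℓ⟩ : ∃ l, l = (d * M + c * q x0) / 2 := ⟨_, rfl⟩
    have hℓ1 : d * M < ℓ := by rw [hℓ]; linarith only [hkey]
    have hℓ2 : ℓ < c * q x0 := by rw [hℓ]; linarith only [hkey]
    have hℓx0 : ℓ < q x0 := by
      have h7 : (0:ℝ) ≤ (1 - c) * q x0 :=
        mul_nonneg (by linarith only [hc1]) hq0pos.le
      linarith only [h7, hℓ2]
    have hℓα : α < ℓ := lt_of_le_of_lt hMa hℓ1
    have hℓβ : d * β < ℓ :=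
      lt_of_le_of_lt (mul_le_mul_of_nonneg_left hMb hd0.le) hℓ1
    rcases le_or_gt 0 θ with hθ0 | hθ0
    · -- right side
      obtain ⟨y1, hy1⟩ := Filter.eventually_atTop.mp (hqTop.eventually (eventually_lt_nhds hℓβ))
      obtain ⟨A2, hA2gt, hA2eq', hA2le'⟩ := lv_crossing_right (f := fun x => - q x)
        (hqcont.neg) (by simpa using hℓx0 : -q x0 < -ℓ)
        (le_max_right y1 x0) (by simpa using (hy1 (max y1 x0) (le_max_left _ _)).le)
      have hA2eq : q A2 = ℓ := by
        have h := hA2eq'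
        simp only [neg_inj] at h
        exact h
      have hA2le : ∀ x ∈ Set.Icc x0 A2, ℓ ≤ q x := by
        intro x hx
        have h := hA2le' x hx
        simp only [neg_le_neg_iff] at h
        exact h
      have hderA2 : deriv q A2 ≤ 0 := by
        have h := lv_deriv_nonneg_left (f := fun x => - q x) ((hqdiff A2).neg) hA2gt
          (fun x hx => by
            simp only [neg_le_neg_iff]
            rw [hA2eq]
            exact hA2le x ⟨hx.1, hx.2.le⟩)
        rw [deriv.fun_neg] at h
        linarith only [h]
      have hFmono : MonotoneOn F (Set.Icc x0 A2) := by
        apply monotoneOn_of_deriv_nonneg (convex_Icc _ _) hFcont.continuousOn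
          (fun x _ => (hFdiff x).differentiableWithinAt)
        intro x hx
        rw [interior_Icc] at hx
        exact hFd_ge x (le_trans hℓ1.le (hA2le x ⟨hx.1.le, hx.2.le⟩))
      have hFA2 : F x0 ≤ F A2 :=
        hFmono (left_mem_Icc.mpr hA2gt.le) (right_mem_Icc.mpr hA2gt.le) hA2gt.le
      rw [hFq A2, hFq x0, hder0] at hFA2
      rcases eq_or_lt_of_le hθ0 with hθeq | hθpos
      · -- θ = 0 : q is monotone on [x0, A2]
        have hqmono : MonotoneOn q (Set.Icc x0 A2) := by
          apply monotoneOn_of_deriv_nonneg (convex_Icc _ _) hqcont.continuousOn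
            (fun x _ => (hqdiff x).differentiableWithinAt)
          intro x hx
          rw [interior_Icc] at hx
          have hFx : F x0 ≤ F x :=
            hFmono (left_mem_Icc.mpr hA2gt.le) ⟨hx.1.le, hx.2.le⟩ hx.1.le
          rw [hFq x, hFq x0, hder0, ← hθeq] at hFx
          simpa using hFx
        have h := hqmono (left_mem_Icc.mpr hA2gt.le) (right_mem_Icc.mpr hA2gt.le) hA2gt.le
        rw [hA2eq] at h
        linarith only [h, hℓx0]
      · -- θ > 0
        have hpp : p x0 ≤ p A2 := by
          have h : θ * p x0 ≤ θ * p A2 := by linarith only [hFA2, hderA2]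
          exact le_of_mul_le_mul_left h hθpos
        have hpA2 : α * u A2 + β * v A2 = p A2 := by rw [hpdef]
        have hpx0 : α * u x0 + β * v x0 = p x0 := by rw [hpdef]
        have hqA2 : α * u A2 + d * β * v A2 = ℓ := by rw [← hA2eq, hqdef]
        have hqx0' : α * u x0 + d * β * v x0 = q x0 := by rw [hqdef]
        rcases le_total d 1 with hd1 | hd1
        · have hceq : c = d := by
            rw [hc]
            exact min_eq_left (by rw [le_div_iff₀ hd0]; nlinarith only [hd1, hd0])
          rw [hceq] at hℓ2
          have h1 : q x0 ≤ p x0 := by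
            rw [← hpx0, ← hqx0']
            have hint : (0:ℝ) ≤ (1 - d) * (β * v x0) :=
              mul_nonneg (by linarith only [hd1]) (mul_nonneg hβ.le (hv0 x0))
            linarith only [hint]
          have h2 : d * p A2 ≤ ℓ := by
            rw [← hpA2]
            have hint : (0:ℝ) ≤ (1 - d) * (α * u A2) :=
              mul_nonneg (by linarith only [hd1]) (mul_nonneg hα.le (hu0 A2))
            linarith only [hqA2, hint]
          have h4 : d * p x0 ≤ d * p A2 := mul_le_mul_of_nonneg_left hpp hd0.le
          have h5 : d * p x0 < d * q x0 := by linarith only [h4, h2, hℓ2]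
          have h6 : p x0 < q x0 := lt_of_mul_lt_mul_left h5 hd0.le
          linarith only [h6, h1]
        · have hceq : c = 1/d := by
            rw [hc]
            exact min_eq_right (by rw [div_le_iff₀ hd0]; nlinarith only [hd1])
          rw [hceq] at hℓ2
          have h1 : q x0 ≤ d * p x0 := by
            rw [← hpx0, ← hqx0']
            have hint : (0:ℝ) ≤ (d - 1) * (α * u x0) :=
              mul_nonneg (by linarith only [hd1]) (mul_nonneg hα.le (hu0 x0))
            linarith only [hint]
          have h2 : p A2 ≤ ℓ := by
            rw [← hpA2]
            have hint : (0:ℝ) ≤ (d - 1) * (β * v A2) :=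
              mul_nonneg (by linarith only [hd1]) (mul_nonneg hβ.le (hv0 A2))
            linarith only [hqA2, hint]
          have h4 : d * p x0 < d * (1 / d * q x0) :=
            mul_lt_mul_of_pos_left (lt_of_le_of_lt (le_trans hpp h2) hℓ2) hd0
          have e : d * (1 / d * q x0) = q x0 := by field_simp
          linarith only [h4, e, h1]
    · -- left side, θ < 0
      obtain ⟨y1, hy1⟩ := Filter.eventually_atBot.mp (hqBot.eventually (eventually_lt_nhds hℓα))
      obtain ⟨A1, hA1lt, hA1eq', hA1le'⟩ := lv_crossing_left (f := fun x => - q x)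
        (hqcont.neg) (by simpa using hℓx0 : -q x0 < -ℓ)
        (min_le_right y1 x0) (by simpa using (hy1 (min y1 x0) (min_le_left _ _)).le)
      have hA1eq : q A1 = ℓ := by
        have h := hA1eq'
        simp only [neg_inj] at h
        exact h
      have hA1le : ∀ x ∈ Set.Icc A1 x0, ℓ ≤ q x := by
        intro x hx
        have h := hA1le' x hx
        simp only [neg_le_neg_iff] at h
        exact h
      have hderA1 : 0 ≤ deriv q A1 := by
        have h := lv_deriv_nonpos_right (f := fun x => - q x) ((hqdiff A1).neg) hA1lt
          (fun x hx => by
            simp only [neg_le_neg_iff]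
            rw [hA1eq]
            exact hA1le x ⟨hx.1.le, hx.2⟩)
        rw [deriv.fun_neg] at h
        linarith only [h]
      have hFmono : MonotoneOn F (Set.Icc A1 x0) := by
        apply monotoneOn_of_deriv_nonneg (convex_Icc _ _) hFcont.continuousOn
          (fun x _ => (hFdiff x).differentiableWithinAt)
        intro x hx
        rw [interior_Icc] at hx
        exact hFd_ge x (le_trans hℓ1.le (hA1le x ⟨hx.1.le, hx.2.le⟩))
      have hFA1 : F A1 ≤ F x0 :=
        hFmono (left_mem_Icc.mpr hA1lt.le) (right_mem_Icc.mpr hA1lt.le) hA1lt.le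
      rw [hFq A1, hFq x0, hder0] at hFA1
      have hpp : p x0 ≤ p A1 := by
        have h : (-θ) * p x0 ≤ (-θ) * p A1 := by linarith only [hFA1, hderA1]
        exact le_of_mul_le_mul_left h (by linarith only [hθ0])
      have hpA1 : α * u A1 + β * v A1 = p A1 := by rw [hpdef]
      have hpx0 : α * u x0 + β * v x0 = p x0 := by rw [hpdef]
      have hqA1 : α * u A1 + d * β * v A1 = ℓ := by rw [← hA1eq, hqdef]
      have hqx0' : α * u x0 + d * β * v x0 = q x0 := by rw [hqdef]
      rcases le_total d 1 with hd1 | hd1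
      · have hceq : c = d := by
          rw [hc]
          exact min_eq_left (by rw [le_div_iff₀ hd0]; nlinarith only [hd1, hd0])
        rw [hceq] at hℓ2
        have h1 : q x0 ≤ p x0 := by
          rw [← hpx0, ← hqx0']
          have hint : (0:ℝ) ≤ (1 - d) * (β * v x0) :=
            mul_nonneg (by linarith only [hd1]) (mul_nonneg hβ.le (hv0 x0))
          linarith only [hint]
        have h2 : d * p A1 ≤ ℓ := by
          rw [← hpA1]
          have hint : (0:ℝ) ≤ (1 - d) * (α * u A1) :=
            mul_nonneg (by linarith only [hd1]) (mul_nonneg hα.le (hu0 A1))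
          linarith only [hqA1, hint]
        have h4 : d * p x0 ≤ d * p A1 := mul_le_mul_of_nonneg_left hpp hd0.le
        have h5 : d * p x0 < d * q x0 := by linarith only [h4, h2, hℓ2]
        have h6 : p x0 < q x0 := lt_of_mul_lt_mul_left h5 hd0.le
        linarith only [h6, h1]
      · have hceq : c = 1/d := by
          rw [hc]
          exact min_eq_right (by rw [div_le_iff₀ hd0]; nlinarith only [hd1])
        rw [hceq] at hℓ2
        have h1 : q x0 ≤ d * p x0 := by
          rw [← hpx0, ← hqx0']
          have hint : (0:ℝ) ≤ (d - 1) * (α * u x0) :=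
            mul_nonneg (by linarith only [hd1]) (mul_nonneg hα.le (hu0 x0))
          linarith only [hint]
        have h2 : p A1 ≤ ℓ := by
          rw [← hpA1]
          have hint : (0:ℝ) ≤ (d - 1) * (β * v A1) :=
            mul_nonneg (by linarith only [hd1]) (mul_nonneg hβ.le (hv0 A1))
          linarith only [hqA1, hint]
        have h4 : d * p x0 < d * (1 / d * q x0) :=
          mul_lt_mul_of_pos_left (lt_of_le_of_lt (le_trans hpp h2) hℓ2) hd0
        have e : d * (1 / d * q x0) = q x0 := by field_simp
        linarith only [h4, e, h1]
  ----------------------------------------------------------------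
  intro x
  have h1 := Hlow x
  have h2 := Hup x
  rw [hqdef] at h1 h2
  simp only at h1 h2
  rw [hm] at h1
  rw [hM] at h2
  exact ⟨h1, h2⟩
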